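/- Let (X_i)_{i≥1} be i.i.d. random variables with values in ℤ_{≥−1} = {−1,0,1,2,…}, with P(X_1 = −1) > 0 and E[X_1] = 0. Define L_1(x) = x^2 P(X_1 ≥ x) and L(x) = Var(X_1 1_{|X_1| ≤ x}) for x > 0, and let (a_n) be a sequence of positive reals. Assume that L_1 and L are slowly varying at infinity, that L_1(x)/L(x) → 0 as x → ∞, that a_n → ∞, and that n L(a_n)/a_n^2 → 2 as n → ∞. Then for every ε > 0, n P(X_1 ≥ ε a_n) → 0 as n → ∞; consequently, a_n^{−1} max_{1≤i≤n} X_i converges to 0 in probability. -/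

import Mathlib

open MeasureTheory ProbabilityTheory Filter
open scoped ENNReal Topology

/-- Let `(X_i)` be i.i.d., `ℤ_{≥−1}`-valued, with `P(X_1 = −1) > 0` and `E[X_1] = 0`.
Let `L₁(x) = x² P(X_1 ≥ x)` and `L(x) = Var(X_1 1_{|X_1| ≤ x})` be slowly varying with
`L₁/L → 0`, and let `a_n → ∞` satisfy `n L(a_n)/a_n² → 2`. Then for every `ε > 0`,
`n P(X_1 ≥ ε a_n) → 0`; consequently `a_n⁻¹ max_{1≤i≤n} X_i → 0` in probability. -/
theorem stmt11 {Ω : Type} [MeasurableSpace Ω] (μ : Measure Ω) [IsProbabilityMeasure μ]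
    (X : ℕ → Ω → ℤ) (hmeas : ∀ i, Measurable (X i)) (hval : ∀ i ω, -1 ≤ X i ω)
    (hindep : iIndepFun X μ)
    (hident : ∀ i, Measure.map (X i) μ = Measure.map (X 0) μ)
    (hneg : 0 < μ {ω | X 0 ω = -1})
    (hint : Integrable (fun ω => (X 0 ω : ℝ)) μ)
    (hmean : ∫ ω, (X 0 ω : ℝ) ∂μ = 0)
    (L1 L : ℝ → ℝ)
    (hL1def : ∀ x : ℝ, 0 < x → L1 x = x ^ 2 * (μ {ω | x ≤ (X 0 ω : ℝ)}).toReal)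
    (hLdef : ∀ x : ℝ, 0 < x →
      L x = variance (fun ω => if |(X 0 ω : ℝ)| ≤ x then (X 0 ω : ℝ) else 0) μ)
    (hL1sv : ∀ c : ℝ, 0 < c → Tendsto (fun x => L1 (c * x) / L1 x) atTop (𝓝 1))
    (hLsv : ∀ c : ℝ, 0 < c → Tendsto (fun x => L (c * x) / L x) atTop (𝓝 1))
    (hratio : Tendsto (fun x => L1 x / L x) atTop (𝓝 0))
    (a : ℕ → ℝ) (hapos : ∀ n, 0 < a n) (ha : Tendsto a atTop atTop)
    (hnorm : Tendsto (fun n : ℕ => (n : ℝ) * L (a n) / (a n) ^ 2) atTop (𝓝 2)) :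
    (∀ ε : ℝ, 0 < ε →
      Tendsto (fun n : ℕ => (n : ℝ) * (μ {ω | ε * a n ≤ (X 0 ω : ℝ)}).toReal) atTop (𝓝 0)) ∧
    (∀ ε : ℝ, 0 < ε →
      Tendsto (fun n => μ {ω | ε <
          |(a (n + 1))⁻¹ *
            (((Finset.range (n + 1)).sup' Finset.nonempty_range_add_one
                fun i => X i ω : ℤ) : ℝ)|})
        atTop (𝓝 0)) := by
  -- L is eventually nonzero
  have hLne : ∀ᶠ x in atTop, L x ≠ 0 := by
    have h1 := hLsv 1 one_pos
    simp only [one_mul] at h1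
    exact (h1.eventually_ne one_ne_zero).mono fun x hx h => hx (by simp [h])
  have part1 : ∀ ε : ℝ, 0 < ε →
      Tendsto (fun n : ℕ => (n : ℝ) * (μ {ω | ε * a n ≤ (X 0 ω : ℝ)}).toReal) atTop (𝓝 0) := by
    intro ε hε
    have haε : Tendsto (fun n => ε * a n) atTop atTop := ha.const_mul_atTop hε
    have t1 := hnorm
    have t2 : Tendsto (fun n : ℕ => L1 (ε * a n) / L (ε * a n)) atTop (𝓝 0) := hratio.comp haε
    have t3 : Tendsto (fun n : ℕ => L (ε * a n) / L (a n)) atTop (𝓝 1) := (hLsv ε hε).comp ha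
    have tg : Tendsto (fun n : ℕ => ((n : ℝ) * L (a n) / (a n) ^ 2) *
        (L1 (ε * a n) / L (ε * a n)) * (L (ε * a n) / L (a n)) * (ε ^ 2)⁻¹) atTop
        (𝓝 (2 * 0 * 1 * (ε ^ 2)⁻¹)) := ((t1.mul t2).mul t3).mul_const _
    rw [show (2 : ℝ) * 0 * 1 * (ε ^ 2)⁻¹ = 0 by ring] at tg
    apply tg.congr'
    filter_upwards [ha.eventually hLne, haε.eventually hLne] with n hLa hLεa
    have hA := hapos n
    have hεA : (0:ℝ) < ε * a n := mul_pos hε hA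
    have hμ : (μ {ω | ε * a n ≤ (X 0 ω : ℝ)}).toReal = L1 (ε * a n) / (ε * a n) ^ 2 := by
      rw [hL1def _ hεA]
      field_simp
    rw [hμ]
    have hLεa' : L (a n * ε) ≠ 0 := by rwa [mul_comm]
    field_simp
  refine ⟨part1, fun ε hε => ?_⟩
  -- identical distribution transfer
  have hmap : ∀ (i : ℕ) (c : ℝ), μ {ω | c ≤ (X i ω : ℝ)} = μ {ω | c ≤ (X 0 ω : ℝ)} := by
    intro i c
    have hs : MeasurableSet {z : ℤ | c ≤ (z : ℝ)} := trivial
    have h1 : μ {ω | c ≤ (X i ω : ℝ)} = Measure.map (X i) μ {z : ℤ | c ≤ (z : ℝ)} := by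
      rw [Measure.map_apply (hmeas i) hs]; rfl
    have h2 : μ {ω | c ≤ (X 0 ω : ℝ)} = Measure.map (X 0) μ {z : ℤ | c ≤ (z : ℝ)} := by
      rw [Measure.map_apply (hmeas 0) hs]; rfl
    rw [h1, hident i, h2]
  -- real-valued limit for the shifted sequence
  have hshift : Tendsto (fun n : ℕ => ((n + 1 : ℕ) : ℝ) *
      (μ {ω | ε * a (n + 1) ≤ (X 0 ω : ℝ)}).toReal) atTop (𝓝 0) :=
    (part1 ε hε).comp (tendsto_add_atTop_nat 1)
  -- ENNReal upper bound tends to 0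
  set g : ℕ → ℝ≥0∞ := fun n => ((n + 1 : ℕ) : ℝ≥0∞) * μ {ω | ε * a (n + 1) ≤ (X 0 ω : ℝ)}
  have hgne : ∀ n, g n ≠ ∞ := fun n =>
    ENNReal.mul_ne_top (ENNReal.natCast_ne_top _) (measure_ne_top μ _)
  have hg : Tendsto g atTop (𝓝 0) := by
    rw [← ENNReal.tendsto_toReal_iff hgne ENNReal.zero_ne_top]
    simp only [g, ENNReal.toReal_mul, ENNReal.toReal_natCast, ENNReal.toReal_zero]
    exact hshift
  have haε : Tendsto (fun n => ε * a n) atTop atTop := ha.const_mul_atTop hε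
  refine tendsto_of_tendsto_of_tendsto_of_le_of_le' tendsto_const_nhds hg
    (Eventually.of_forall fun n => zero_le) ?_
  have h1 : ∀ᶠ n : ℕ in atTop, 1 < ε * a (n + 1) :=
    (haε.comp (tendsto_add_atTop_nat 1)).eventually_gt_atTop 1
  filter_upwards [h1] with n hn
  set A := a (n + 1) with hA
  have hApos := hapos (n + 1)
  -- inclusion into the union of tail events
  have hsub : {ω | ε < |A⁻¹ * (((Finset.range (n + 1)).sup' Finset.nonempty_range_add_one
      fun i => X i ω : ℤ) : ℝ)|} ⊆
      ⋃ i ∈ Finset.range (n + 1), {ω | ε * A ≤ (X i ω : ℝ)} := by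
    intro ω hω
    simp only [Set.mem_setOf_eq] at hω
    set m : ℤ := (Finset.range (n + 1)).sup' Finset.nonempty_range_add_one fun i => X i ω with hm
    obtain ⟨i, hi, him⟩ := Finset.exists_mem_eq_sup' Finset.nonempty_range_add_one fun i => X i ω
    have hmge : (-1 : ℤ) ≤ m := by
      have h0 : X 0 ω ≤ m :=
        Finset.le_sup' (fun i => X i ω) (Finset.mem_range.mpr (Nat.succ_pos n))
      exact le_trans (hval 0 ω) h0
    have habs : ε * A < |(m : ℝ)| := by
      have : ε < A⁻¹ * |(m : ℝ)| := by
        rwa [abs_mul, abs_of_pos (inv_pos.mpr hApos)] at hω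
      calc ε * A < (A⁻¹ * |(m : ℝ)|) * A := by
            exact mul_lt_mul_of_pos_right this hApos
        _ = |(m : ℝ)| := by rw [mul_comm, ← mul_assoc, mul_inv_cancel₀ (show A ≠ 0 from hApos.ne'), one_mul]
    have hm0 : (0 : ℝ) ≤ (m : ℝ) := by
      by_contra h
      push_neg at h
      have hmle : (m : ℝ) ≤ 1 := le_of_lt (lt_of_lt_of_le h (by norm_num))
      have : |(m : ℝ)| ≤ 1 := abs_le.mpr ⟨by exact_mod_cast hmge, hmle⟩
      exact absurd (lt_of_le_of_lt this (lt_trans hn habs)) (lt_irrefl _)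
    refine Set.mem_biUnion hi ?_
    have : ε * A ≤ (m : ℝ) := le_of_lt (by rwa [abs_of_nonneg hm0] at habs)
    simpa [Set.mem_setOf_eq, ← him] using this
  calc μ _ ≤ μ (⋃ i ∈ Finset.range (n + 1), {ω | ε * A ≤ (X i ω : ℝ)}) := measure_mono hsub
    _ ≤ ∑ i ∈ Finset.range (n + 1), μ {ω | ε * A ≤ (X i ω : ℝ)} := measure_biUnion_finset_le _ _
    _ = ∑ _i ∈ Finset.range (n + 1), μ {ω | ε * A ≤ (X 0 ω : ℝ)} := by
        refine Finset.sum_congr rfl fun i _ => hmap i _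
    _ = g n := by
        simp [g, Finset.sum_const, Finset.card_range, nsmul_eq_mul, hA]
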